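/- arXiv:1711.03091 — 2 statements merged into one kernel-verified Lean document; each statement's English description precedes it below -/
import Mathlib

section
/- Suppose for all t, W_{t+1}/W_t ≤ exp((e^{Hλ}-1)·P_t/H) and W_{T+1}/W_1 ≥ (w/R)^d · exp(λ(OPT - Hk - LTw)), where P(A) = Σ_t P_t ≤ HT and 0 < Hλ ≤ 1. Then OPT - P(A) ≤ H²Tλ + (d·ln(R/w))/λ + Hk + LTw. -/
/-- For `0 ≤ z ≤ 1`, `exp z ≤ 1 + z + z²`. -/
lemma exp_le_one_add_add_sq {z : ℝ} (h0 : 0 ≤ z) (h1 : z ≤ 1) :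
    Real.exp z ≤ 1 + z + z ^ 2 := by
  have habs : |z| ≤ 1 := by rw [abs_of_nonneg h0]; exact h1
  have hb := Real.exp_bound habs (n := 3) (by norm_num)
  have hsum : ∑ i ∈ Finset.range 3, z ^ i / i.factorial = 1 + z + z ^ 2 / 2 := by
    norm_num [Finset.sum_range_succ, Nat.factorial]
  rw [hsum] at hb
  have h2 : Real.exp z - (1 + z + z ^ 2 / 2) ≤ |z| ^ 3 * (4 / (6 * 3)) := by
    calc Real.exp z - (1 + z + z ^ 2 / 2)
        ≤ |Real.exp z - (1 + z + z ^ 2 / 2)| := le_abs_self _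
      _ ≤ _ := by simpa [Nat.factorial] using hb
  rw [abs_of_nonneg h0] at h2
  nlinarith [pow_le_pow_of_le_one h0 h1 (show 2 ≤ 3 by norm_num), sq_nonneg z]

/-- Combining the upper and lower potential bounds of the exponentially weighted
forecaster yields the regret bound
OPT - P(A) ≤ H²Tλ + d·ln(R/w)/λ + Hk + LTw. -/
theorem ewf_regret_bound
    (T d : ℕ) (H lam w R OPT L k : ℝ) (W P : ℕ → ℝ)
    (hWpos : ∀ t, 0 < W t)
    (hPnn : ∀ t, 0 ≤ P t)
    (hH : 0 < H) (hlam : 0 < lam) (hHlam : H * lam ≤ 1)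
    (hw : 0 < w) (hwR : w ≤ R)
    (hupper : ∀ t ∈ Finset.Icc 1 T,
      W (t + 1) / W t ≤ Real.exp ((Real.exp (H * lam) - 1) * P t / H))
    (hlower : (w / R) ^ d * Real.exp (lam * (OPT - H * k - L * T * w)) ≤
      W (T + 1) / W 1)
    (hPA : ∑ t ∈ Finset.Icc 1 T, P t ≤ H * T) :
    OPT - ∑ t ∈ Finset.Icc 1 T, P t ≤
      H ^ 2 * T * lam + (d * Real.log (R / w)) / lam + H * k + L * T * w := by
  set c : ℝ := (Real.exp (H * lam) - 1) / H with hc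
  -- telescoping upper bound
  have htel : ∀ n, n ≤ T → W (n + 1) / W 1 ≤
      Real.exp (∑ t ∈ Finset.Icc 1 n, (Real.exp (H * lam) - 1) * P t / H) := by
    intro n hn
    induction n with
    | zero => simp [div_self (hWpos 1).ne']
    | succ m ih =>
      have hm : m ≤ T := Nat.le_of_succ_le hn
      have h1 := ih hm
      have h2 := hupper (m + 1) (Finset.mem_Icc.2 ⟨Nat.le_add_left 1 m, hn⟩)
      have hW1 : 0 < W 1 := hWpos 1
      have hWm : 0 < W (m + 1) := hWpos (m + 1)
      have key : W (m + 1 + 1) / W 1 = (W (m + 1 + 1) / W (m + 1)) * (W (m + 1) / W 1) := by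
        field_simp
      rw [key, Finset.sum_Icc_succ_top (Nat.le_add_left 1 m), Real.exp_add, mul_comm]
      exact mul_le_mul h1 h2 (div_nonneg (hWpos _).le hWm.le) (Real.exp_pos _).le
  have htelT := htel T le_rfl
  have hchain := le_trans hlower htelT
  -- take logs
  have hpos : (0:ℝ) < (w / R) ^ d * Real.exp (lam * (OPT - H * k - L * T * w)) :=
    mul_pos (pow_pos (div_pos hw (lt_of_lt_of_le hw hwR)) d) (Real.exp_pos _)
  have hlog := Real.log_le_log hpos hchain
  rw [Real.log_mul (ne_of_gt (pow_pos (div_pos hw (lt_of_lt_of_le hw hwR)) d)) (Real.exp_pos _).ne',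
    Real.log_pow, Real.log_exp, Real.log_exp] at hlog
  set PA : ℝ := ∑ t ∈ Finset.Icc 1 T, P t with hPAdef
  have hsum_eq : ∑ t ∈ Finset.Icc 1 T, (Real.exp (H * lam) - 1) * P t / H
      = (Real.exp (H * lam) - 1) / H * PA := by
    rw [Finset.mul_sum]
    exact Finset.sum_congr rfl (fun t _ => by ring)
  rw [hsum_eq] at hlog
  -- bound c
  have hz0 : 0 ≤ H * lam := le_of_lt (mul_pos hH hlam)
  have hexp := exp_le_one_add_add_sq hz0 hHlam
  have hcle : (Real.exp (H * lam) - 1) / H ≤ lam + H * lam ^ 2 := by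
    rw [div_le_iff₀ hH]
    nlinarith
  have hcnn : 0 ≤ (Real.exp (H * lam) - 1) / H :=
    div_nonneg (by nlinarith [Real.add_one_le_exp (H * lam)]) hH.le
  have hPAnn : 0 ≤ PA := Finset.sum_nonneg (fun t _ => hPnn t)
  have hbound : (Real.exp (H * lam) - 1) / H * PA ≤ lam * PA + H ^ 2 * T * lam ^ 2 := by
    have h1 : (Real.exp (H * lam) - 1) / H * PA ≤ (lam + H * lam ^ 2) * PA :=
      mul_le_mul_of_nonneg_right hcle hPAnn
    have h2 : H * lam ^ 2 * PA ≤ H * lam ^ 2 * (H * T) :=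
      mul_le_mul_of_nonneg_left hPA (by positivity)
    nlinarith
  -- log(w/R) = - log(R/w)
  have hR : 0 < R := lt_of_lt_of_le hw hwR
  have hlogwR : Real.log (w / R) = - Real.log (R / w) := by
    rw [Real.log_div hw.ne' hR.ne', Real.log_div hR.ne' hw.ne']; ring
  rw [hlogwR] at hlog
  have hlognn : 0 ≤ Real.log (R / w) :=
    Real.log_nonneg (by rw [le_div_iff₀ hw]; simpa using hwR)
  -- combine
  have hfinal : lam * (OPT - H * k - L * T * w) ≤
      lam * PA + H ^ 2 * T * lam ^ 2 + d * Real.log (R / w) := by linarith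
  have hdiv : OPT - H * k - L * T * w ≤ PA + H ^ 2 * T * lam + d * Real.log (R / w) / lam := by
    rw [← mul_le_mul_iff_right₀ hlam]
    have : lam * (PA + H ^ 2 * T * lam + d * Real.log (R / w) / lam)
        = lam * PA + H ^ 2 * T * lam ^ 2 + d * Real.log (R / w) := by
      field_simp
    rw [this]; exact hfinal
  have : (d : ℝ) * Real.log (R / w) / lam = d * Real.log (R / w) / lam := rfl
  linarith [hdiv]
end

section
/- Let u₁, ..., u_N : C → [0,H] be piecewise L-Lipschitz functions with B(ρ*, w) ⊂ C ⊂ B(0,R), (w,k)-dispersed at a maximizer ρ*. Let μ be the distribution on C with density proportional to exp((ε N)/(2H) · (1/N)Σᵢ uᵢ(ρ)). Then for any ζ > 0, with probability at least 1-ζ over ρ̂ ∼ μ, (1/N)Σᵢ uᵢ(ρ̂) ≥ (1/N)Σᵢ uᵢ(ρ*) - (2H)/(Nε)·(d·ln(R/w) + ln(1/ζ)) - Lw - Hk/N. -/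
open MeasureTheory Metric

/-- A partition `P` splits a set `B` if `B` intersects at least two members of `P`. -/
def SplitBy {α : Type*} (P : Set (Set α)) (B : Set α) : Prop :=
  ∃ A ∈ P, ∃ A' ∈ P, A ≠ A' ∧ (B ∩ A).Nonempty ∧ (B ∩ A').Nonempty

/-- Utility guarantee of the exponential mechanism under (w,k)-dispersion: with
probability at least 1-ζ over ρ̂ drawn with density proportional to
exp((εN/2H)·(1/N)Σᵢ uᵢ), the average utility of ρ̂ is within
(2H/(Nε))(d·ln(R/w)+ln(1/ζ)) + Lw + Hk/N of the optimum. -/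
theorem exponential_mechanism_utility
    (d N : ℕ) (hN : 0 < N)
    (C : Set (EuclideanSpace ℝ (Fin d))) (hCmeas : MeasurableSet C)
    (H L w R ε ζ k : ℝ)
    (u : Fin N → EuclideanSpace ℝ (Fin d) → ℝ)
    (hmeas : ∀ i, Measurable (u i))
    (hrange : ∀ i, ∀ ρ ∈ C, u i ρ ∈ Set.Icc 0 H)
    (P : Fin N → Set (Set (EuclideanSpace ℝ (Fin d))))
    (hpart : ∀ i, ⋃₀ P i = C)
    (hdisj : ∀ i, (P i).Pairwise Disjoint)
    (hlip : ∀ i, ∀ A ∈ P i, LipschitzOnWith (Real.toNNReal L) (u i) A)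
    (ρstar : EuclideanSpace ℝ (Fin d))
    (hmax : ∀ ρ ∈ C, ∑ i, u i ρ ≤ ∑ i, u i ρstar)
    (hball : closedBall ρstar w ⊆ C)
    (hCR : C ⊆ closedBall (0 : EuclideanSpace ℝ (Fin d)) R)
    (hw : 0 < w) (hH : 0 < H) (hε : 0 < ε) (hζ : 0 < ζ)
    (hL : 0 ≤ L) (hk : 0 ≤ k)
    (hdisp : ({i : Fin N | SplitBy (P i) (closedBall ρstar w)}.ncard : ℝ) ≤ k) :
    (∫ ρ in {ρ ∈ C | (1 / N : ℝ) * ∑ i, u i ρ <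
        (1 / N : ℝ) * ∑ i, u i ρstar -
          ((2 * H) / (N * ε) * (d * Real.log (R / w) + Real.log (1 / ζ))
            + L * w + H * k / N)},
        Real.exp ((ε * N) / (2 * H) * ((1 / N : ℝ) * ∑ i, u i ρ))) /
      (∫ ρ in C, Real.exp ((ε * N) / (2 * H) * ((1 / N : ℝ) * ∑ i, u i ρ))) ≤ ζ := by
  classical
  have hNR : (0:ℝ) < (N:ℝ) := Nat.cast_pos.mpr hN
  have hNne : (N:ℝ) ≠ 0 := hNR.ne'
  set g : EuclideanSpace ℝ (Fin d) → ℝ := fun ρ => ∑ i, u i ρ with hg_def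
  set c : ℝ := (ε * (N:ℝ)) / (2 * H) with hc_def
  have hcpos : 0 < c := by positivity
  set f : EuclideanSpace ℝ (Fin d) → ℝ :=
    fun ρ => Real.exp (c * ((1 / (N:ℝ)) * g ρ)) with hf_def
  set Δ : ℝ := (2 * H) / ((N:ℝ) * ε) * ((d:ℝ) * Real.log (R / w) + Real.log (1 / ζ))
      + L * w + H * k / (N:ℝ) with hΔ_def
  set S : Set (EuclideanSpace ℝ (Fin d)) :=
    {ρ ∈ C | (1 / (N:ℝ)) * g ρ < (1 / (N:ℝ)) * g ρstar - Δ} with hS_def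
  show (∫ ρ in S, f ρ) / (∫ ρ in C, f ρ) ≤ ζ
  -- basic facts
  have hρstarC : ρstar ∈ C := hball (mem_closedBall_self hw.le)
  have hR0 : 0 ≤ R := by
    have h := hCR hρstarC
    rw [mem_closedBall, dist_zero_right] at h
    exact (norm_nonneg _).trans h
  have hg_meas : Measurable g := Finset.measurable_sum _ (fun i _ => hmeas i)
  have hf_meas : Measurable f := ((hg_meas.const_mul (1 / (N:ℝ))).const_mul c).exp
  have hS_meas : MeasurableSet S := by
    have : S = C ∩ {ρ | (1 / (N:ℝ)) * g ρ < (1 / (N:ℝ)) * g ρstar - Δ} := by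
      ext ρ; simp [hS_def, Set.mem_setOf_eq, Set.mem_inter_iff]
    rw [this]
    exact hCmeas.inter (measurableSet_lt (hg_meas.const_mul _) measurable_const)
  have hSsubC : S ⊆ C := fun ρ hρ => hρ.1
  -- volume facts
  have hCfin : volume C ≠ ⊤ :=
    ne_top_of_le_ne_top (measure_closedBall_lt_top).ne (measure_mono hCR)
  set v : ℝ := (volume (ball (0 : EuclideanSpace ℝ (Fin d)) 1)).toReal with hv_def
  have hvpos : 0 < v := ENNReal.toReal_pos (measure_ball_pos volume _ one_pos).ne'
    measure_ball_lt_top.ne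
  have hfinrank : Module.finrank ℝ (EuclideanSpace ℝ (Fin d)) = d := finrank_euclideanSpace_fin
  have hvolBw : (volume (closedBall ρstar w)).toReal = w ^ d * v := by
    rw [Measure.addHaar_closedBall volume ρstar hw.le, hfinrank, ENNReal.toReal_mul,
      ENNReal.toReal_ofReal (by positivity)]
  have hvolBR : (volume (closedBall (0 : EuclideanSpace ℝ (Fin d)) R)).toReal = R ^ d * v := by
    rw [Measure.addHaar_closedBall volume _ hR0, hfinrank, ENNReal.toReal_mul,
      ENNReal.toReal_ofReal (by positivity)]
  have hwRv : w ^ d * v ≤ R ^ d * v := by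
    rw [← hvolBw, ← hvolBR]
    exact ENNReal.toReal_mono measure_closedBall_lt_top.ne
      (measure_mono (hball.trans hCR))
  have hRdpos : 0 < R ^ d := by
    have h1 : (0:ℝ) < w ^ d * v := by positivity
    nlinarith
  -- integrability
  have hf_intC : IntegrableOn f C volume := by
    apply Measure.integrableOn_of_bounded hCfin hf_meas.aestronglyMeasurable
      (M := Real.exp (c * H))
    filter_upwards [ae_restrict_mem hCmeas] with ρ hρ
    rw [Real.norm_eq_abs, abs_of_pos (Real.exp_pos _)]
    apply Real.exp_le_exp.mpr
    have hgH : g ρ ≤ (N:ℝ) * H := by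
      calc g ρ ≤ ∑ _i : Fin N, H := Finset.sum_le_sum (fun i _ => (hrange i ρ hρ).2)
        _ = (N:ℝ) * H := by simp [mul_comm]
    have : (1 / (N:ℝ)) * g ρ ≤ H := by
      rw [div_mul_eq_mul_div, one_mul, div_le_iff₀ hNR]; linarith
    nlinarith
  -- dispersion: lower bound on the ball
  set T : Set (Fin N) := {i | SplitBy (P i) (closedBall ρstar w)} with hT_def
  have key : ∀ ρ ∈ closedBall ρstar w, ∀ i : Fin N,
      u i ρstar - u i ρ ≤ if i ∈ T then H else L * w := by
    intro ρ hρ i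
    by_cases hiT : i ∈ T
    · rw [if_pos hiT]
      have h1 := hrange i ρstar hρstarC
      have h2 := hrange i ρ (hball hρ)
      simp only [Set.mem_Icc] at h1 h2
      linarith
    · rw [if_neg hiT]
      have hρU : ρ ∈ ⋃₀ P i := by rw [hpart i]; exact hball hρ
      obtain ⟨A, hA, hρA⟩ := hρU
      have hsU : ρstar ∈ ⋃₀ P i := by rw [hpart i]; exact hρstarC
      obtain ⟨A', hA', hsA⟩ := hsU
      have hAA : A' = A := by
        by_contra hne
        exact hiT ⟨A', hA', A, hA, hne, ⟨ρstar, mem_closedBall_self hw.le, hsA⟩,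
          ⟨ρ, hρ, hρA⟩⟩
      rw [hAA] at hsA
      have hd := (hlip i A hA).dist_le_mul ρstar hsA ρ hρA
      have hLL : (L.toNNReal : ℝ) = L := Real.coe_toNNReal L hL
      rw [hLL] at hd
      have hdw : dist ρstar ρ ≤ w := by
        rw [dist_comm]; exact mem_closedBall.mp hρ
      have h1 : dist (u i ρstar) (u i ρ) ≤ L * w :=
        hd.trans (mul_le_mul_of_nonneg_left hdw hL)
      rw [Real.dist_eq] at h1
      exact (le_abs_self _).trans h1
  have hsum_ite : ∑ i : Fin N, (if i ∈ T then H else L * w) ≤ k * H + (N:ℝ) * (L * w) := by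
    rw [Finset.sum_ite]
    simp only [Finset.sum_const, nsmul_eq_mul]
    have hcard : ((Finset.univ.filter (fun i => i ∈ T)).card : ℝ) ≤ k := by
      have he : (Finset.univ.filter (fun i => i ∈ T)).card = T.ncard := by
        rw [Set.ncard_eq_toFinset_card' T]
        congr 1
        ext i
        simp [hT_def]
      rw [he]
      exact hdisp
    have hcard2 : ((Finset.univ.filter (fun i => ¬ i ∈ T)).card : ℝ) ≤ (N:ℝ) := by
      have := Finset.card_filter_le (Finset.univ : Finset (Fin N)) (fun i => ¬ i ∈ T)
      calc ((Finset.univ.filter (fun i => ¬ i ∈ T)).card : ℝ)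
          ≤ ((Finset.univ : Finset (Fin N)).card : ℝ) := by exact_mod_cast this
        _ = (N:ℝ) := by simp
    have hLw : 0 ≤ L * w := by positivity
    nlinarith
  have hlow : ∀ ρ ∈ closedBall ρstar w,
      (1 / (N:ℝ)) * g ρstar - (L * w + H * k / (N:ℝ)) ≤ (1 / (N:ℝ)) * g ρ := by
    intro ρ hρ
    have h1 : g ρstar - g ρ ≤ k * H + (N:ℝ) * (L * w) := by
      have h2 : ∑ i, (u i ρstar - u i ρ) ≤ ∑ i : Fin N, (if i ∈ T then H else L * w) :=
        Finset.sum_le_sum (fun i _ => key ρ hρ i)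
      rw [Finset.sum_sub_distrib] at h2
      exact h2.trans hsum_ite
    have h3 : (1/(N:ℝ)) * (g ρstar - g ρ) ≤ (1/(N:ℝ)) * (k * H + (N:ℝ) * (L * w)) :=
      mul_le_mul_of_nonneg_left h1 (by positivity)
    have h4 : (1/(N:ℝ)) * (k * H + (N:ℝ) * (L * w)) = H * k / (N:ℝ) + L * w := by
      field_simp
    rw [h4, mul_sub] at h3
    linarith
  -- constants
  set opt : ℝ := (1 / (N:ℝ)) * g ρstar with hopt_def
  set A : ℝ := Real.exp (c * (opt - Δ)) with hA_def
  set B : ℝ := Real.exp (c * (opt - (L * w + H * k / (N:ℝ)))) with hB_def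
  have hApos : 0 < A := Real.exp_pos _
  have hBpos : 0 < B := Real.exp_pos _
  clear_value A B opt
  -- numerator bound
  have hf_intS : IntegrableOn f S volume := hf_intC.mono_set hSsubC
  have hnum : (∫ ρ in S, f ρ) ≤ (R ^ d * v) * A := by
    have h1 : (∫ ρ in S, f ρ) ≤ ∫ _ρ in S, A := by
      apply setIntegral_mono_on hf_intS
        ((integrableOn_const_iff).mpr (Or.inr ((measure_mono hSsubC).trans_lt
          (lt_top_iff_ne_top.mpr hCfin)))) hS_meas
      intro ρ hρ
      show f ρ ≤ A
      rw [hA_def, hopt_def]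
      exact Real.exp_le_exp.mpr (mul_le_mul_of_nonneg_left (le_of_lt hρ.2) hcpos.le)
    have h2 : (∫ _ρ in S, A) = (volume S).toReal * A := by
      rw [setIntegral_const, smul_eq_mul, measureReal_def]
    have h3 : (volume S).toReal ≤ R ^ d * v := by
      rw [← hvolBR]
      exact ENNReal.toReal_mono measure_closedBall_lt_top.ne
        (measure_mono (hSsubC.trans hCR))
    calc (∫ ρ in S, f ρ) ≤ (volume S).toReal * A := h2 ▸ h1
      _ ≤ (R ^ d * v) * A := mul_le_mul_of_nonneg_right h3 hApos.le
  -- denominator bound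
  have hden : (w ^ d * v) * B ≤ ∫ ρ in C, f ρ := by
    have h1 : (∫ _ρ in closedBall ρstar w, B) ≤ ∫ ρ in closedBall ρstar w, f ρ := by
      apply setIntegral_mono_on
        ((integrableOn_const_iff).mpr (Or.inr measure_closedBall_lt_top))
        (hf_intC.mono_set hball) measurableSet_closedBall
      intro ρ hρ
      show B ≤ f ρ
      rw [hB_def]
      exact Real.exp_le_exp.mpr (mul_le_mul_of_nonneg_left (hlow ρ hρ) hcpos.le)
    have h2 : (∫ _ρ in closedBall ρstar w, B) = (w ^ d * v) * B := by
      rw [setIntegral_const, smul_eq_mul, measureReal_def, hvolBw]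
    have h3 : (∫ ρ in closedBall ρstar w, f ρ) ≤ ∫ ρ in C, f ρ :=
      setIntegral_mono_set hf_intC (Filter.Eventually.of_forall (fun ρ => (Real.exp_pos _).le))
        (HasSubset.Subset.eventuallyLE hball)
    linarith [h2 ▸ h1]
  have hdenpos : 0 < ∫ ρ in C, f ρ := lt_of_lt_of_le (mul_pos (by positivity) hBpos) hden
  -- key algebraic identity
  have hc1 : c * ((2 * H) / ((N:ℝ) * ε)) = 1 := by
    rw [hc_def]; field_simp
  have hcΔ : c * Δ = ((d:ℝ) * Real.log (R / w) + Real.log (1 / ζ))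
      + c * (L * w + H * k / (N:ℝ)) := by
    have h5 : c * Δ = (c * ((2 * H) / ((N:ℝ) * ε)))
        * ((d:ℝ) * Real.log (R / w) + Real.log (1 / ζ))
        + c * (L * w + H * k / (N:ℝ)) := by
      rw [hΔ_def]; ring
    rw [h5, hc1, one_mul]
  have hRWpos : 0 < (R / w) ^ d := by
    rcases Nat.eq_zero_or_pos d with hd0 | hd0
    · simp [hd0]
    · have hRpos : 0 < R := by
        rcases hR0.lt_or_eq with h | h
        · exact h
        · exfalso; rw [← h] at hRdpos; simp [zero_pow hd0.ne'] at hRdpos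
      positivity
  have hX : Real.exp (-((d:ℝ) * Real.log (R / w) + Real.log (1 / ζ)))
      = ((R / w) ^ d)⁻¹ * ζ := by
    rw [neg_add, Real.exp_add]
    congr 1
    · rw [← Real.log_pow, Real.exp_neg, Real.exp_log hRWpos]
    · rw [one_div, Real.log_inv, neg_neg, Real.exp_log hζ]
  have hA2 : A = B * (((R / w) ^ d)⁻¹ * ζ) := by
    rw [hA_def, hB_def, ← hX, ← Real.exp_add]
    congr 1
    rw [mul_sub, mul_sub, hcΔ]; ring
  have hkey : (R ^ d * v) * A = ζ * ((w ^ d * v) * B) := by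
    rw [hA2, div_pow]
    have hinv : (R ^ d) * (R ^ d)⁻¹ = 1 := mul_inv_cancel₀ hRdpos.ne'
    rw [inv_div]
    linear_combination (v * B * ζ * w ^ d) * hinv
  rw [div_le_iff₀ hdenpos]
  calc (∫ ρ in S, f ρ) ≤ (R ^ d * v) * A := hnum
    _ = ζ * ((w ^ d * v) * B) := hkey
    _ ≤ ζ * ∫ ρ in C, f ρ := mul_le_mul_of_nonneg_left hden hζ.le
end
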